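/- arXiv:2502.20863 — 2 statements merged into one kernel-verified Lean document; each statement's English description precedes it below -/
import Mathlib

section
/- Let n, m, d be positive integers satisfying m ≥ 10^9, m ≤ d ≤ n and n ≥ 2^m. Then for the binomial random graph G ~ G(n, d/n), one has Pr[G ∉ 𝒢_m] ≤ e^{−dn/10}. -/
open Finset MeasureTheory
open scoped NNReal ENNReal

attribute [local instance] Classical.propDecidable

noncomputable section

/-- `sBound m = ⌊2^(10⁻⁸·m)⌋`. -/
def sBound (m : ℕ) : ℕ := ⌊(2 : ℝ) ^ ((m : ℝ) / 10 ^ 8)⌋₊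

/-- Membership in the family `𝒢_m`, for a graph with vertex set `Vs` and adjacency
relation `Adj`. -/
def MemGm (m : ℕ) {V : Type*} (Vs : Finset V) (Adj : V → V → Prop) : Prop :=
  ∀ P : V → Fin (sBound m),
    (∀ i, ((Vs.filter fun v => P v = i).card : ℝ) ≤ (Vs.card : ℝ) / m) →
    0.55 * ((Vs.card : ℝ) * ((Vs.card : ℝ) - 1) / 2) <
      ∑ i : Fin (sBound m), ∑ j : Fin (sBound m),
        if i < j ∧ ∃ u ∈ Vs, ∃ v ∈ Vs, P u = i ∧ P v = j ∧ Adj u v then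
          ((Vs.filter fun v => P v = i).card : ℝ) * ((Vs.filter fun v => P v = j).card : ℝ)
        else 0

/-- The graph on `[n]` determined by a choice `f` of which pairs are edges. -/
def graphOf (n : ℕ) (f : Sym2 (Fin n) → Bool) : SimpleGraph (Fin n) where
  Adj u v := u ≠ v ∧ f s(u, v)
  symm := by
    constructor
    intro u v h
    exact ⟨h.1.symm, by rw [Sym2.eq_swap]; exact h.2⟩
  loopless := by constructor; intro u h; exact h.1 rfl

lemma cylMeasure (n : ℕ) (p : ℝ≥0∞) (hp : p ≤ 1) (S : Finset (Sym2 (Fin n))) :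
    Measure.pi (fun _ : Sym2 (Fin n) => (PMF.bernoulli p.toNNReal (by simpa using ENNReal.toNNReal_mono ENNReal.one_ne_top hp)).toMeasure)
      {f | ∀ e ∈ S, f e = false} = (1 - p) ^ S.card := by
  classical
  have hset : {f : Sym2 (Fin n) → Bool | ∀ e ∈ S, f e = false}
      = Set.univ.pi (fun e => if e ∈ S then ({false} : Set Bool) else Set.univ) := by
    ext f
    simp only [Set.mem_setOf_eq, Set.mem_pi, Set.mem_univ, forall_true_left]
    constructor
    · intro h e
      split
      · next he => simp [h e he]
      · trivial
    · intro h e he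
      have := h e
      rw [if_pos he] at this
      simpa using this
  rw [hset, Measure.pi_pi]
  have hb : (PMF.bernoulli p.toNNReal (by simpa using ENNReal.toNNReal_mono ENNReal.one_ne_top hp)).toMeasure ({false} : Set Bool) = 1 - p := by
    rw [PMF.toMeasure_apply_singleton _ _ (measurableSet_singleton _)]
    refine (PMF.bernoulli_apply _ false).trans ?_
    simp [ENNReal.coe_sub, ENNReal.coe_toNNReal (ne_top_of_le_ne_top ENNReal.one_ne_top hp)]
  have hv : ∀ e : Sym2 (Fin n),
      (PMF.bernoulli p.toNNReal (by simpa using ENNReal.toNNReal_mono ENNReal.one_ne_top hp)).toMeasure (if e ∈ S then ({false} : Set Bool) else Set.univ)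
        = if e ∈ S then (1 - p) else 1 := by
    intro e; split
    · exact hb
    · exact measure_univ
  simp only [hv]
  rw [Finset.prod_ite_mem, Finset.univ_inter, Finset.prod_const]

lemma card_S_lb (n k : ℕ) (P : Fin n → Fin k) (T : Finset (Fin k × Fin k))
    (hT : ∀ q ∈ T, q.1 < q.2) :
    ∑ q ∈ T, (univ.filter fun v => P v = q.1).card * (univ.filter fun v => P v = q.2).card
      ≤ (univ.filter (fun e : Sym2 (Fin n) =>
          ∃ u v : Fin n, e = s(u, v) ∧ (P u, P v) ∈ T)).card := by
  classical
  set B : Fin k × Fin k → Finset (Sym2 (Fin n)) := fun q =>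
    ((univ.filter fun v => P v = q.1) ×ˢ (univ.filter fun v => P v = q.2)).image
      (fun uv => s(uv.1, uv.2)) with hB
  have hcard : ∀ q ∈ T, (B q).card
      = (univ.filter fun v => P v = q.1).card * (univ.filter fun v => P v = q.2).card := by
    intro q hq
    rw [hB]
    rw [Finset.card_image_of_injOn, Finset.card_product]
    rintro ⟨u, v⟩ huv ⟨u', v'⟩ huv' heq
    simp only [Finset.mem_coe, Finset.mem_product, Finset.mem_filter, Finset.mem_univ, true_and] at huv huv'
    rcases Sym2.eq_iff.mp heq with ⟨h1, h2⟩ | ⟨h1, h2⟩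
    · exact Prod.ext h1 h2
    · exfalso
      have h1' : u = v' := h1
      have : q.1 = q.2 := by rw [← huv.1, h1', huv'.2]
      exact absurd this (hT q hq).ne
  have hdisj : ∀ x ∈ T, ∀ y ∈ T, x ≠ y → Disjoint (B x) (B y) := by
    intro x hx y hy hxy
    rw [Finset.disjoint_left]
    intro e hex hey
    rw [hB] at hex hey
    simp only [Finset.mem_image, Finset.mem_product, Finset.mem_filter, Finset.mem_univ,
      true_and, Prod.exists] at hex hey
    obtain ⟨u, v, ⟨hu, hv⟩, he⟩ := hex
    obtain ⟨u', v', ⟨hu', hv'⟩, he'⟩ := hey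
    rw [← he'] at he
    rcases Sym2.eq_iff.mp he with ⟨h1, h2⟩ | ⟨h1, h2⟩
    · apply hxy
      refine Prod.ext ?_ ?_
      · rw [← hu, h1, hu']
      · rw [← hv, h2, hv']
    · have hx1 : x.1 = y.2 := by rw [← hu, h1, hv']
      have hx2 : x.2 = y.1 := by rw [← hv, h2, hu']
      have := (hT x hx).trans_le (le_of_eq hx2)
      have := (hT y hy).trans_le (le_of_eq hx1.symm)
      exact absurd (lt_trans ‹x.1 < y.1› ‹y.1 < x.1›) (lt_irrefl _)
  have hsub : T.biUnion B ⊆ univ.filter (fun e : Sym2 (Fin n) =>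
      ∃ u v : Fin n, e = s(u, v) ∧ (P u, P v) ∈ T) := by
    intro e he
    rw [Finset.mem_biUnion] at he
    obtain ⟨q, hq, heB⟩ := he
    rw [hB] at heB
    simp only [Finset.mem_image, Finset.mem_product, Finset.mem_filter, Finset.mem_univ,
      true_and, Prod.exists] at heB
    obtain ⟨u, v, ⟨hu, hv⟩, he⟩ := heB
    rw [Finset.mem_filter]
    exact ⟨Finset.mem_univ _, u, v, he.symm, by rw [hu, hv]; exact hq⟩
  calc ∑ q ∈ T, (univ.filter fun v => P v = q.1).card * (univ.filter fun v => P v = q.2).card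
      = ∑ q ∈ T, (B q).card := (Finset.sum_congr rfl fun q hq => (hcard q hq).symm)
    _ = (T.biUnion B).card := (Finset.card_biUnion hdisj).symm
    _ ≤ _ := Finset.card_le_card hsub

def cylSet (n k : ℕ) (P : Fin n → Fin (sBound m)) (T : Finset (Fin (sBound m) × Fin (sBound m))) : Finset (Sym2 (Fin n)) :=
  univ.filter (fun e => ∃ u v : Fin n, e = s(u, v) ∧ (P u, P v) ∈ T)

lemma exists_bad_witness (n m : ℕ) (hm : 10 ^ 9 ≤ m) (f : Sym2 (Fin n) → Bool)
    (hbad : ¬ MemGm m (Finset.univ : Finset (Fin n)) (graphOf n f).Adj) :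
    ∃ (P : Fin n → Fin (sBound m)) (T : Finset (Fin (sBound m) × Fin (sBound m))),
      (n : ℝ) ^ 2 / 5 ≤ ((cylSet n (sBound m) P T).card : ℝ)
        ∧ ∀ e ∈ cylSet n (sBound m) P T, f e = false := by
  classical
  unfold MemGm at hbad
  push_neg at hbad
  obtain ⟨P, hsmall, hsum⟩ := hbad
  simp only [Finset.card_univ, Fintype.card_fin] at hsmall hsum
  set E : Fin (sBound m) → Fin (sBound m) → Prop := fun i j =>
    ∃ u v : Fin n, P u = i ∧ P v = j ∧ (graphOf n f).Adj u v with hE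
  have hEiff : ∀ i j : Fin (sBound m),
      (∃ u ∈ (univ : Finset (Fin n)), ∃ v ∈ (univ : Finset (Fin n)),
        P u = i ∧ P v = j ∧ (graphOf n f).Adj u v) ↔ E i j := by
    intro i j
    simp [hE]
  set T : Finset (Fin (sBound m) × Fin (sBound m)) :=
    univ.filter (fun q : Fin (sBound m) × Fin (sBound m) => q.1 < q.2 ∧ ¬ E q.1 q.2) with hT
  have hTlt : ∀ q ∈ T, q.1 < q.2 := by
    intro q hq
    rw [hT, Finset.mem_filter] at hq
    exact hq.2.1
  refine ⟨P, T, ?_, ?_⟩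
  · -- cardinality lower bound
    set A : Fin (sBound m) → ℝ := fun i => ((univ.filter fun v => P v = i).card : ℝ) with hA
    have hA0 : ∀ i, 0 ≤ A i := fun i => Nat.cast_nonneg _
    have hN : ∑ i : Fin (sBound m), (univ.filter fun v => P v = i).card
        = (univ : Finset (Fin n)).card :=
      (Finset.card_eq_sum_card_fiberwise (fun v _ => Finset.mem_univ (P v))).symm
    have hAn : ∑ i, A i = n := by
      simp only [hA]
      rw [← Nat.cast_sum, hN]
      simp
    have hAsq : ∑ i, (A i) ^ 2 ≤ (n : ℝ) ^ 2 / m := by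
      have hstep : ∀ i, (A i) ^ 2 ≤ ((n : ℝ) / m) * A i := by
        intro i
        rw [sq]
        exact mul_le_mul_of_nonneg_right (hsmall i) (hA0 i)
      calc ∑ i, (A i) ^ 2 ≤ ∑ i, ((n : ℝ) / m) * A i := Finset.sum_le_sum fun i _ => hstep i
        _ = ((n : ℝ) / m) * ∑ i, A i := by rw [Finset.mul_sum]
        _ = (n : ℝ) ^ 2 / m := by rw [hAn]; ring
    -- decompose the sum over pairs i < j
    have hsplit : (∑ i, ∑ j, if i < j then A i * A j else 0)
        = (∑ q ∈ T, A q.1 * A q.2)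
          + ∑ i, ∑ j, if i < j ∧ E i j then A i * A j else 0 := by
      have hTsum : (∑ q ∈ T, A q.1 * A q.2)
          = ∑ i, ∑ j, if i < j ∧ ¬ E i j then A i * A j else 0 := by
        rw [hT, Finset.sum_filter, ← Finset.univ_product_univ, Finset.sum_product]
      rw [hTsum, ← Finset.sum_add_distrib]
      refine Finset.sum_congr rfl fun i _ => ?_
      rw [← Finset.sum_add_distrib]
      refine Finset.sum_congr rfl fun j _ => ?_
      by_cases h1 : i < j
      · by_cases h2 : E i j <;> simp [h1, h2]
      · simp [h1]
    have hsum' : (∑ i, ∑ j, if i < j ∧ E i j then A i * A j else 0)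
        ≤ 0.55 * ((n : ℝ) * ((n : ℝ) - 1) / 2) := by
      calc (∑ i, ∑ j, if i < j ∧ E i j then A i * A j else 0)
          = ∑ i, ∑ j, if i < j ∧ ∃ u ∈ (univ : Finset (Fin n)), ∃ v ∈ (univ : Finset (Fin n)),
              P u = i ∧ P v = j ∧ (graphOf n f).Adj u v then A i * A j else 0 := by
            refine Finset.sum_congr rfl fun i _ => Finset.sum_congr rfl fun j _ => ?_
            exact (if_congr (and_congr_right fun _ => (hEiff i j).symm) rfl rfl)
        _ ≤ 0.55 * ((n : ℝ) * ((n : ℝ) - 1) / 2) := by convert hsum <;> rfl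
    have hident : (∑ i, A i) ^ 2
        = ∑ i, (A i) ^ 2 + 2 * ∑ i, ∑ j, if i < j then A i * A j else 0 := by
      have key : ∀ i j : Fin (sBound m), A i * A j
          = (if i < j then A i * A j else 0) + (if j < i then A i * A j else 0)
            + (if i = j then A i * A j else 0) := by
        intro i j
        rcases lt_trichotomy i j with h | h | h
        · simp [h, h.ne, not_lt_of_gt h]
        · simp [h, lt_irrefl]
        · simp [h, h.ne', not_lt_of_gt h]
      have h1 : (∑ i, A i) ^ 2 = ∑ i, ∑ j, A i * A j := by
        rw [sq, Finset.sum_mul_sum]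
      rw [h1]
      have h2 : ∑ i, ∑ j, A i * A j
          = (∑ i, ∑ j, if i < j then A i * A j else 0)
            + (∑ i, ∑ j, if j < i then A i * A j else 0)
            + (∑ i, ∑ j, if i = j then A i * A j else 0) := by
        rw [← Finset.sum_add_distrib, ← Finset.sum_add_distrib]
        refine Finset.sum_congr rfl fun i _ => ?_
        rw [← Finset.sum_add_distrib, ← Finset.sum_add_distrib]
        exact Finset.sum_congr rfl fun j _ => key i j
      have h3 : (∑ i, ∑ j : Fin (sBound m), if j < i then A i * A j else 0)
          = ∑ i, ∑ j : Fin (sBound m), if i < j then A i * A j else 0 := by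
        rw [Finset.sum_comm]
        refine Finset.sum_congr rfl fun i _ => Finset.sum_congr rfl fun j _ => ?_
        rw [mul_comm]
      have h4 : (∑ i, ∑ j : Fin (sBound m), if i = j then A i * A j else 0)
          = ∑ i, (A i) ^ 2 := by
        refine Finset.sum_congr rfl fun i _ => ?_
        rw [Finset.sum_ite_eq (Finset.univ) i (fun j => A i * A j)]
        simp [sq]
      rw [h2, h3, h4]
      ring
    have hW : (n : ℝ) ^ 2 - (n : ℝ) ^ 2 / m
        ≤ 2 * ∑ i, ∑ j, if i < j then A i * A j else 0 := by
      rw [hAn] at hident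
      linarith [hAsq]
    have hm' : (10 : ℝ) ^ 9 ≤ (m : ℝ) := by exact_mod_cast hm
    have hdivm : (n : ℝ) ^ 2 / m ≤ (n : ℝ) ^ 2 / 10 ^ 9 := by
      apply div_le_div_of_nonneg_left (by positivity) (by norm_num) hm'
    have hTweight : (n : ℝ) ^ 2 / 5 ≤ ∑ q ∈ T, A q.1 * A q.2 := by
      have hn0 : (0 : ℝ) ≤ n := Nat.cast_nonneg n
      nlinarith [hW, hsum', hdivm, hsplit, sq_nonneg ((n:ℝ)), hn0]
    have hcards := card_S_lb n (sBound m) P T hTlt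
    have hcast : ((∑ q ∈ T, (univ.filter fun v => P v = q.1).card
        * (univ.filter fun v => P v = q.2).card : ℕ) : ℝ) = ∑ q ∈ T, A q.1 * A q.2 := by
      push_cast [hA]
      rfl
    calc (n : ℝ) ^ 2 / 5 ≤ ∑ q ∈ T, A q.1 * A q.2 := hTweight
      _ ≤ ((cylSet n (sBound m) P T).card : ℝ) := by
          rw [← hcast]
          exact_mod_cast hcards
  · -- all edges of S are absent in f
    intro e he
    rw [cylSet, Finset.mem_filter] at he
    obtain ⟨-, u, v, he, hq⟩ := he
    rw [hT, Finset.mem_filter] at hq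
    obtain ⟨-, hlt, hnE⟩ := hq
    have huv : u ≠ v := by
      intro h
      rw [h] at hlt
      exact absurd hlt (lt_irrefl _)
    have : ¬ (graphOf n f).Adj u v := by
      intro hadj
      exact hnE ⟨u, v, rfl, rfl, hadj⟩
    have h2 : ¬ (u ≠ v ∧ f s(u, v) = true) := this
    rw [he]
    simp only [huv, ne_eq, not_false_eq_true, true_and, Bool.not_eq_true] at h2
    exact h2

lemma numeric (n m d : ℕ) (hm : 10 ^ 9 ≤ m) (hmd : m ≤ d) (hdn : d ≤ n) (hn : 2 ^ m ≤ n) :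
    ((sBound m : ℝ)) ^ n * 2 ^ (sBound m ^ 2) ≤ Real.exp ((d : ℝ) * n / 10) := by
  have hx0 : (0:ℝ) ≤ (m:ℝ)/10^8 := by positivity
  have hfl : (sBound m : ℝ) ≤ (2:ℝ) ^ ((m:ℝ)/10^8) := Nat.floor_le (by positivity)
  have hlog2 : Real.log 2 ≤ 0.7 := le_of_lt (lt_of_lt_of_le Real.log_two_lt_d9 (by norm_num))
  have hlog2' : (0:ℝ) ≤ Real.log 2 := Real.log_nonneg (by norm_num)
  have h2m : (((sBound m)^2 : ℕ) : ℝ) ≤ ((2^m : ℕ) : ℝ) := by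
    push_cast
    calc (sBound m:ℝ)^2 ≤ ((2:ℝ)^((m:ℝ)/10^8))^2 :=
          pow_le_pow_left₀ (Nat.cast_nonneg _) hfl 2
      _ = (2:ℝ) ^ ((m:ℝ)/10^8 * 2) := by
          rw [← Real.rpow_natCast ((2:ℝ)^((m:ℝ)/10^8)) 2, ← Real.rpow_mul (by norm_num)]
          norm_num
      _ ≤ (2:ℝ) ^ ((m:ℝ)) := by
          apply Real.rpow_le_rpow_of_exponent_le (by norm_num : (1:ℝ) ≤ 2)
          nlinarith [(Nat.cast_nonneg m : (0:ℝ) ≤ m)]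
      _ = (2:ℝ) ^ (m:ℕ) := Real.rpow_natCast 2 m
  have hsq_le_n : (sBound m)^2 ≤ n := le_trans (by exact_mod_cast h2m) hn
  have hA : (sBound m : ℝ)^n ≤ Real.exp (Real.log 2 * ((m:ℝ)/10^8 * n)) := by
    calc (sBound m : ℝ)^n ≤ ((2:ℝ)^((m:ℝ)/10^8))^n :=
          pow_le_pow_left₀ (Nat.cast_nonneg _) hfl n
      _ = (2:ℝ) ^ ((m:ℝ)/10^8 * n) := by
          rw [← Real.rpow_natCast ((2:ℝ)^((m:ℝ)/10^8)) n, ← Real.rpow_mul (by norm_num)]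
      _ = Real.exp (Real.log 2 * ((m:ℝ)/10^8 * n)) := by
          rw [Real.rpow_def_of_pos (by norm_num)]
  have hB : ((2:ℝ)) ^ (sBound m ^ 2) ≤ Real.exp (Real.log 2 * n) := by
    calc ((2:ℝ)) ^ (sBound m ^ 2) ≤ (2:ℝ) ^ n := pow_le_pow_right₀ (by norm_num) hsq_le_n
      _ = (2:ℝ) ^ ((n:ℕ):ℝ) := (Real.rpow_natCast 2 n).symm
      _ = Real.exp (Real.log 2 * n) := by rw [Real.rpow_def_of_pos (by norm_num)]
  calc ((sBound m : ℝ)) ^ n * 2 ^ (sBound m ^ 2)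
      ≤ Real.exp (Real.log 2 * ((m:ℝ)/10^8 * n)) * Real.exp (Real.log 2 * n) :=
        mul_le_mul hA hB (by positivity) (Real.exp_nonneg _)
    _ = Real.exp (Real.log 2 * ((m:ℝ)/10^8 * n) + Real.log 2 * n) := (Real.exp_add _ _).symm
    _ ≤ Real.exp ((d : ℝ) * n / 10) := by
        apply Real.exp_le_exp.mpr
        have hmd' : (m:ℝ) ≤ d := Nat.cast_le.mpr hmd
        have hd9 : (10:ℝ)^9 ≤ d := by
          calc (10:ℝ)^9 = ((10^9 : ℕ) : ℝ) := by norm_num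
            _ ≤ (m:ℝ) := Nat.cast_le.mpr hm
            _ ≤ d := hmd'
        have hn0 : (0:ℝ) ≤ n := Nat.cast_nonneg n
        have h1 : (m:ℝ) * n ≤ (d:ℝ) * n := mul_le_mul_of_nonneg_right hmd' hn0
        have h2 : (10:ℝ)^9 * n ≤ (d:ℝ) * n := mul_le_mul_of_nonneg_right hd9 hn0
        nlinarith [mul_nonneg hlog2' hn0, mul_nonneg (mul_nonneg hlog2' hn0) hn0]


/-- For `m ≥ 10⁹`, `m ≤ d ≤ n` and `n ≥ 2^m`, the binomial random graph `G(n, d/n)`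
(each pair an edge independently with probability `p = d/n`) fails to lie in `𝒢_m` with
probability at most `e^{−dn/10}`. -/
theorem stmt_9 (n m d : ℕ) (hm : 10 ^ 9 ≤ m) (hmd : m ≤ d) (hdn : d ≤ n) (hn : 2 ^ m ≤ n)
    (p : ℝ≥0∞) (hp : p ≤ 1) (hpval : p.toReal = (d : ℝ) / n) :
    Measure.pi (fun _ : Sym2 (Fin n) => (PMF.bernoulli p.toNNReal (by simpa using ENNReal.toNNReal_mono ENNReal.one_ne_top hp)).toMeasure)
        {f | ¬ MemGm m (Finset.univ : Finset (Fin n)) (graphOf n f).Adj}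
      ≤ ENNReal.ofReal (Real.exp (-((d : ℝ) * n) / 10)) := by
  classical
  set μ := Measure.pi (fun _ : Sym2 (Fin n) => (PMF.bernoulli p.toNNReal (by simpa using ENNReal.toNNReal_mono ENNReal.one_ne_top hp)).toMeasure) with hμ
  have hn0 : 0 < n := lt_of_lt_of_le (pow_pos (by norm_num : (0:ℕ) < 2) m) hn
  have hnR : (0 : ℝ) < n := by exact_mod_cast hn0
  have hd0 : 0 < d := lt_of_lt_of_le (lt_of_lt_of_le (by norm_num) hm) hmd
  have hdR : (0 : ℝ) < d := by exact_mod_cast hd0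
  have hdnR : (d : ℝ) / n ≤ 1 := by
    rw [div_le_one hnR]
    exact_mod_cast hdn
  set E : (Fin n → Fin (sBound m)) × Finset (Fin (sBound m) × Fin (sBound m))
      → Set (Sym2 (Fin n) → Bool) := fun q =>
    if (n : ℝ) ^ 2 / 5 ≤ ((cylSet n (sBound m) q.1 q.2).card : ℝ)
      then {f | ∀ e ∈ cylSet n (sBound m) q.1 q.2, f e = false} else ∅ with hE
  have hcover : {f | ¬ MemGm m (Finset.univ : Finset (Fin n)) (graphOf n f).Adj} ⊆ ⋃ q, E q := by
    intro f hf
    obtain ⟨P, T, hcard, hfprop⟩ := exists_bad_witness n m hm f hf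
    refine Set.mem_iUnion.mpr ⟨(P, T), ?_⟩
    rw [hE]
    simp only
    rw [if_pos hcard]
    exact hfprop
  have hperE : ∀ q, μ (E q) ≤ ENNReal.ofReal (Real.exp (-((d : ℝ) * n) / 5)) := by
    intro q
    rw [hE]
    simp only
    by_cases hq : (n : ℝ) ^ 2 / 5 ≤ ((cylSet n (sBound m) q.1 q.2).card : ℝ)
    · rw [if_pos hq, hμ, cylMeasure n p hp (cylSet n (sBound m) q.1 q.2)]
      set c := (cylSet n (sBound m) q.1 q.2).card with hc
      have h1p : (1 : ℝ≥0∞) - p = ENNReal.ofReal (1 - (d : ℝ) / n) := by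
        have hpfin : p ≠ ⊤ := ne_top_of_le_ne_top ENNReal.one_ne_top hp
        rw [← hpval, ENNReal.ofReal_sub _ ENNReal.toReal_nonneg, ENNReal.ofReal_one,
          ENNReal.ofReal_toReal hpfin]
      have hnneg : (0 : ℝ) ≤ 1 - (d : ℝ) / n := by linarith
      rw [h1p, ← ENNReal.ofReal_pow hnneg]
      apply ENNReal.ofReal_le_ofReal
      calc (1 - (d : ℝ) / n) ^ c ≤ Real.exp (-((d : ℝ) / n)) ^ c := by
            apply pow_le_pow_left₀ hnneg
            linarith [Real.add_one_le_exp (-((d : ℝ) / n))]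
        _ = Real.exp (-((d : ℝ) / n) * c) := by
            rw [← Real.exp_nat_mul]
            ring_nf
        _ ≤ Real.exp (-((d : ℝ) * n) / 5) := by
            apply Real.exp_le_exp.mpr
            have hstep : (d : ℝ) / n * ((n : ℝ) ^ 2 / 5) ≤ (d : ℝ) / n * c :=
              mul_le_mul_of_nonneg_left hq (by positivity)
            have hid : (d : ℝ) / n * ((n : ℝ) ^ 2 / 5) = (d : ℝ) * n / 5 := by
              field_simp
            rw [hid] at hstep
            linarith
    · rw [if_neg hq]
      simp
  have hcardtype : Fintype.card ((Fin n → Fin (sBound m))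
      × Finset (Fin (sBound m) × Fin (sBound m))) = sBound m ^ n * 2 ^ (sBound m ^ 2) := by
    simp only [Fintype.card_prod, Fintype.card_fun, Fintype.card_finset, Fintype.card_fin, sq]
  calc μ {f | ¬ MemGm m (Finset.univ : Finset (Fin n)) (graphOf n f).Adj}
      ≤ μ (⋃ q, E q) := measure_mono hcover
    _ ≤ ∑ q, μ (E q) := measure_iUnion_fintype_le μ E
    _ ≤ ∑ _q : (Fin n → Fin (sBound m)) × Finset (Fin (sBound m) × Fin (sBound m)),
          ENNReal.ofReal (Real.exp (-((d : ℝ) * n) / 5)) :=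
        Finset.sum_le_sum fun q _ => hperE q
    _ = (Fintype.card ((Fin n → Fin (sBound m)) × Finset (Fin (sBound m) × Fin (sBound m))) : ℝ≥0∞)
          * ENNReal.ofReal (Real.exp (-((d : ℝ) * n) / 5)) := by
        rw [Finset.sum_const, Finset.card_univ, nsmul_eq_mul]
    _ ≤ ENNReal.ofReal (Real.exp (-((d : ℝ) * n) / 10)) := by
        rw [hcardtype, ← ENNReal.ofReal_natCast, ← ENNReal.ofReal_mul (Nat.cast_nonneg _)]
        apply ENNReal.ofReal_le_ofReal
        have hnum := numeric n m d hm hmd hdn hn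
        have hcast : ((sBound m ^ n * 2 ^ (sBound m ^ 2) : ℕ) : ℝ)
            = (sBound m : ℝ) ^ n * 2 ^ (sBound m ^ 2) := by push_cast; ring
        rw [hcast]
        calc (sBound m : ℝ) ^ n * 2 ^ (sBound m ^ 2) * Real.exp (-((d : ℝ) * n) / 5)
            ≤ Real.exp ((d : ℝ) * n / 10) * Real.exp (-((d : ℝ) * n) / 5) :=
              mul_le_mul_of_nonneg_right hnum (Real.exp_nonneg _)
          _ = Real.exp (-((d : ℝ) * n) / 10) := by
              rw [← Real.exp_add]
              ring_nf
end
end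

section
/- Let n ≥ 10^5 and b be positive integers with b + 1 ≤ n/2000, and let x_1 ≤ x_2 ≤ … ≤ x_n be nonnegative integers in which no value occurs more than b times. Define a process as follows: set ℓ_1 = 1, r_1 = n; at step j, if r_j − ℓ_j < n/2000, stop and set T = j; otherwise, since x_{ℓ_j} < x_{r_j}, there is a unique index p_j ∈ {ℓ_j, …, r_j − 1} maximizing δ(x_i, x_{i+1}) over i ∈ {ℓ_j, …, r_j − 1}; if p_j − ℓ_j ≥ r_j − p_j, call j a left step and set (ℓ_{j+1}, r_{j+1}) = (ℓ_j, p_j), and otherwise call j a right step and set (ℓ_{j+1}, r_{j+1}) = (p_j + 1, r_j). Then at least one of the following holds: (C1) there exist indices 1 < t_1 < t_2 < t_3 ≤ T such that t_1 − 1, t_2 − 1 and t_3 − 1 are right steps and ℓ_{t_1} − ℓ_1 ≥ n/1024, ℓ_{t_2} − ℓ_{t_1} ≥ n/1024, and ℓ_{t_3} − ℓ_{t_2} ≥ n/1024; or (C2) there exist indices 1 < t_1 < t_2 < t_3 ≤ T such that t_1 − 1, t_2 − 1 and t_3 − 1 are left steps and r_1 − r_{t_1} ≥ n/1024, r_{t_1}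 − r_{t_2} ≥ n/1024, and r_{t_2} − r_{t_3} ≥ n/1024. -/
attribute [local instance] Classical.propDecidable

noncomputable section

/-- `bitfn x i` is the coefficient `a_{i-1}` in the binary representation
`x = Σ_{i≥0} a_i 2^i`. -/
def bitfn (x i : ℕ) : ℕ := x / 2 ^ (i - 1) % 2

/-- `deltafn x y = max { i ≥ 1 | bit(x,i) ≠ bit(y,i) }`, with `deltafn x x = 0`. -/
def deltafn (x y : ℕ) : ℕ := sSup {i : ℕ | 1 ≤ i ∧ bitfn x i ≠ bitfn y i}

/-- Step `j` of the interval-halving process is a left step iff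
`p_j − ℓ_j ≥ r_j − p_j`. -/
def LeftStep (l r p : ℕ → ℕ) (j : ℕ) : Prop := r j - p j ≤ p j - l j

lemma aux_sum (T : ℕ) (L D : ℕ → ℤ)
    (hD : ∀ j, 1 ≤ j → j < T → D j = L j - L (j+1))
    (h2 : ∀ j, 1 ≤ j → j < T → 2 * D j ≤ L j + 1)
    (hanti : ∀ i j, 1 ≤ i → i ≤ j → j < T → L j ≤ L i) :
    ∀ S : Finset ℕ, ∀ M : ℤ, (∀ j ∈ S, 1 ≤ j ∧ j < T) → (∀ j ∈ S, L j ≤ M) →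
      2 ^ S.card * (∑ j ∈ S, D j) ≤ (2 ^ S.card - 1) * (M + 1) := by
  intro S
  induction S using Finset.strongInductionOn with
  | _ S ih =>
    intro M hS hM
    rcases S.eq_empty_or_nonempty with rfl | hne
    · simp
    · set m := S.min' hne with hmdef
      have hmS : m ∈ S := S.min'_mem hne
      have hm1 : 1 ≤ m := (hS m hmS).1
      have hmT : m < T := (hS m hmS).2
      have hcard : S.card = (S.erase m).card + 1 := by
        rw [Finset.card_erase_of_mem hmS]
        have : 1 ≤ S.card := Finset.card_pos.mpr hne
        omega
      have hsum : ∑ j ∈ S, D j = D m + ∑ j ∈ S.erase m, D j :=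
        (Finset.add_sum_erase _ _ hmS).symm
      have hM' : ∀ j ∈ S.erase m, L j ≤ M - D m := by
        intro j hj
        have hjS : j ∈ S := Finset.mem_of_mem_erase hj
        have hjm : m < j := lt_of_le_of_ne (S.min'_le j hjS) (Ne.symm (Finset.ne_of_mem_erase hj))
        have h1 : L j ≤ L (m+1) := hanti (m+1) j (by omega) (by omega) (hS j hjS).2
        have h2' : L (m+1) = L m - D m := by have := hD m hm1 hmT; omega
        have h3 : L m ≤ M := hM m hmS
        omega
      have ih' := ih (S.erase m) (Finset.erase_ssubset hmS) (M - D m)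
        (fun j hj => hS j (Finset.mem_of_mem_erase hj)) hM'
      have hDm : 2 * D m ≤ M + 1 := le_trans (h2 m hm1 hmT) (by have := hM m hmS; omega)
      rw [hcard, hsum]
      set k := (S.erase m).card
      set s := ∑ j ∈ S.erase m, D j
      have hp : (1:ℤ) ≤ 2 ^ k := one_le_pow₀ (by norm_num)
      have expand : (2:ℤ) ^ (k+1) = 2 * 2 ^ k := by ring
      rw [expand]
      nlinarith [ih', hDm, hp]

lemma greedy_ext (T : ℕ) (hT : 1 ≤ T) (c : ℝ) (hc : 0 < c) (f D : ℕ → ℝ)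
    (P : ℕ → Prop)
    (hmono : ∀ s t, 1 ≤ s → s ≤ t → t ≤ T → f s ≤ f t)
    (hfix : ∀ j, 1 ≤ j → j < T → ¬ P j → f (j+1) = f j)
    (hjump : ∀ j, 1 ≤ j → j < T → f (j+1) - f j ≤ D j)
    (hC : ¬ ∃ t₁ t₂ t₃ : ℕ, 1 < t₁ ∧ t₁ < t₂ ∧ t₂ < t₃ ∧ t₃ ≤ T ∧
      P (t₁-1) ∧ P (t₂-1) ∧ P (t₃-1) ∧
      c ≤ f t₁ - f 1 ∧ c ≤ f t₂ - f t₁ ∧ c ≤ f t₃ - f t₂) :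
    ∃ S : Finset ℕ, S.card ≤ 2 ∧ (∀ j ∈ S, (1 ≤ j ∧ j < T) ∧ P j) ∧
      f T - f 1 < 3 * c + ∑ j ∈ S, D j := by
  by_cases h1 : ∃ t, 1 ≤ t ∧ t ≤ T ∧ c ≤ f t - f 1
  · set t1 := Nat.find h1 with ht1def
    obtain ⟨ht1a, ht1b, ht1c⟩ := Nat.find_spec h1
    have h1lt : 1 < t1 := by
      rcases lt_or_eq_of_le ht1a with h | h
      · exact h
      · exfalso; rw [← h] at ht1c; simp at ht1c; linarith
    have hj1a : 1 ≤ t1 - 1 := by omega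
    have hj1b : t1 - 1 < T := by omega
    have hj1 : t1 - 1 + 1 = t1 := by omega
    have hmin1 : f (t1 - 1) - f 1 < c := by
      have h := Nat.find_min h1 (show t1 - 1 < t1 by omega)
      push_neg at h
      exact h hj1a (by omega)
    have hP1 : P (t1 - 1) := by
      by_contra hP
      have he := hfix (t1-1) hj1a hj1b hP
      rw [hj1] at he
      linarith
    have hb1 : f t1 - f 1 < c + D (t1 - 1) := by
      have hj := hjump (t1-1) hj1a hj1b
      rw [hj1] at hj
      linarith
    by_cases h2 : ∃ t, 1 ≤ t ∧ t ≤ T ∧ c ≤ f t - f t1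
    · set t2 := Nat.find h2 with ht2def
      obtain ⟨ht2a, ht2b, ht2c⟩ := Nat.find_spec h2
      have h2gt : t1 < t2 := by
        by_contra h
        push_neg at h
        have := hmono t2 t1 ht2a h ht1b
        linarith
      have hj2a : 1 ≤ t2 - 1 := by omega
      have hj2b : t2 - 1 < T := by omega
      have hj2 : t2 - 1 + 1 = t2 := by omega
      have hmin2 : f (t2 - 1) - f t1 < c := by
        have h := Nat.find_min h2 (show t2 - 1 < t2 by omega)
        push_neg at h
        exact h hj2a (by omega)
      have hP2 : P (t2 - 1) := by
        by_contra hP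
        have he := hfix (t2-1) hj2a hj2b hP
        rw [hj2] at he
        linarith
      have hb2 : f t2 - f t1 < c + D (t2 - 1) := by
        have hj := hjump (t2-1) hj2a hj2b
        rw [hj2] at hj
        linarith
      by_cases h3 : ∃ t, 1 ≤ t ∧ t ≤ T ∧ c ≤ f t - f t2
      · exfalso
        set t3 := Nat.find h3 with ht3def
        obtain ⟨ht3a, ht3b, ht3c⟩ := Nat.find_spec h3
        have h3gt : t2 < t3 := by
          by_contra h
          push_neg at h
          have := hmono t3 t2 ht3a h ht2b
          linarith
        have hj3a : 1 ≤ t3 - 1 := by omega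
        have hj3b : t3 - 1 < T := by omega
        have hj3 : t3 - 1 + 1 = t3 := by omega
        have hmin3 : f (t3 - 1) - f t2 < c := by
          have h := Nat.find_min h3 (show t3 - 1 < t3 by omega)
          push_neg at h
          exact h hj3a (by omega)
        have hP3 : P (t3 - 1) := by
          by_contra hP
          have he := hfix (t3-1) hj3a hj3b hP
          rw [hj3] at he
          linarith
        exact hC ⟨t1, t2, t3, h1lt, h2gt, h3gt, ht3b, hP1, hP2, hP3, ht1c, ht2c, ht3c⟩
      · push_neg at h3
        have hend : f T - f t2 < c := h3 T hT le_rfl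
        have hne12 : t1 - 1 ≠ t2 - 1 := by omega
        refine ⟨{t1 - 1, t2 - 1}, ?_, ?_, ?_⟩
        · rw [Finset.card_pair hne12]
        · intro j hj
          simp only [Finset.mem_insert, Finset.mem_singleton] at hj
          rcases hj with rfl | rfl
          · exact ⟨⟨hj1a, hj1b⟩, hP1⟩
          · exact ⟨⟨hj2a, hj2b⟩, hP2⟩
        · rw [Finset.sum_pair hne12]
          linarith
    · push_neg at h2
      have hend : f T - f t1 < c := h2 T hT le_rfl
      refine ⟨{t1 - 1}, by simp, ?_, ?_⟩
      · intro j hj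
        simp only [Finset.mem_singleton] at hj
        subst hj
        exact ⟨⟨hj1a, hj1b⟩, hP1⟩
      · rw [Finset.sum_singleton]
        linarith
  · push_neg at h1
    have hend : f T - f 1 < c := h1 T hT le_rfl
    refine ⟨∅, by simp, by simp, ?_⟩
    simp only [Finset.sum_empty]
    linarith

/-- Let `n ≥ 10⁵` and `b` be positive integers with `b + 1 ≤ n/2000`, and let
`x_1 ≤ … ≤ x_n` be nonnegative integers, no value occurring more than `b` times.  Run the
process: `(ℓ_1, r_1) = (1, n)`; at step `j`, stop (setting `T = j`) if `r_j − ℓ_j < n/2000`;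
otherwise let `p_j ∈ {ℓ_j,…,r_j−1}` be the (unique) maximizer of `δ(x_i, x_{i+1})`, and set
`(ℓ_{j+1}, r_{j+1}) = (ℓ_j, p_j)` if `p_j − ℓ_j ≥ r_j − p_j` (a left step) and
`(ℓ_{j+1}, r_{j+1}) = (p_j + 1, r_j)` otherwise (a right step).  Then either (C1) there are
`1 < t₁ < t₂ < t₃ ≤ T` such that `t₁−1, t₂−1, t₃−1` are right steps and
`ℓ_{t₁} − ℓ_1, ℓ_{t₂} − ℓ_{t₁}, ℓ_{t₃} − ℓ_{t₂} ≥ n/1024`, or (C2) there are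
`1 < t₁ < t₂ < t₃ ≤ T` such that `t₁−1, t₂−1, t₃−1` are left steps and
`r_1 − r_{t₁}, r_{t₁} − r_{t₂}, r_{t₂} − r_{t₃} ≥ n/1024`. -/
theorem stmt_14 (n b : ℕ) (hn : 10 ^ 5 ≤ n) (hb : 0 < b)
    (hbn : (b : ℝ) + 1 ≤ (n : ℝ) / 2000)
    (x : ℕ → ℕ) (hmono : ∀ i, 1 ≤ i → i < n → x i ≤ x (i + 1))
    (hmult : ∀ v : ℕ, ((Finset.Icc 1 n).filter fun i => x i = v).card ≤ b)
    (T : ℕ) (hT : 1 ≤ T) (l r p : ℕ → ℕ) (hl1 : l 1 = 1) (hr1 : r 1 = n)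
    (hrun : ∀ j, 1 ≤ j → j < T →
      ((n : ℝ) / 2000 ≤ (r j : ℝ) - (l j : ℝ)) ∧
      (l j ≤ p j ∧ p j < r j) ∧
      (∀ i, l j ≤ i → i < r j → deltafn (x i) (x (i + 1)) ≤ deltafn (x (p j)) (x (p j + 1))) ∧
      (if LeftStep l r p j then l (j + 1) = l j ∧ r (j + 1) = p j
       else l (j + 1) = p j + 1 ∧ r (j + 1) = r j))
    (hstop : (r T : ℝ) - (l T : ℝ) < (n : ℝ) / 2000) :
    (∃ t₁ t₂ t₃ : ℕ, 1 < t₁ ∧ t₁ < t₂ ∧ t₂ < t₃ ∧ t₃ ≤ T ∧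
      (¬ LeftStep l r p (t₁ - 1)) ∧ (¬ LeftStep l r p (t₂ - 1)) ∧ (¬ LeftStep l r p (t₃ - 1)) ∧
      (n : ℝ) / 1024 ≤ (l t₁ : ℝ) - (l 1 : ℝ) ∧
      (n : ℝ) / 1024 ≤ (l t₂ : ℝ) - (l t₁ : ℝ) ∧
      (n : ℝ) / 1024 ≤ (l t₃ : ℝ) - (l t₂ : ℝ)) ∨
    (∃ t₁ t₂ t₃ : ℕ, 1 < t₁ ∧ t₁ < t₂ ∧ t₂ < t₃ ∧ t₃ ≤ T ∧
      LeftStep l r p (t₁ - 1) ∧ LeftStep l r p (t₂ - 1) ∧ LeftStep l r p (t₃ - 1) ∧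
      (n : ℝ) / 1024 ≤ (r 1 : ℝ) - (r t₁ : ℝ) ∧
      (n : ℝ) / 1024 ≤ (r t₁ : ℝ) - (r t₂ : ℝ) ∧
      (n : ℝ) / 1024 ≤ (r t₂ : ℝ) - (r t₃ : ℝ)) := by
  by_contra hcon
  obtain ⟨hC1, hC2⟩ := not_or.mp hcon
  have hn' : (100000 : ℝ) ≤ (n : ℝ) := by
    have : (100000 : ℕ) ≤ n := by norm_num at hn; omega
    exact_mod_cast this
  have hnpos : (0:ℕ) < n := by omega
  set c : ℝ := (n : ℝ) / 1024 with hcdef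
  have hc : 0 < c := by positivity
  -- step facts
  have hstep : ∀ j, 1 ≤ j → j < T →
      (l j ≤ p j ∧ p j < r j) ∧
      (LeftStep l r p j → l (j+1) = l j ∧ r (j+1) = p j) ∧
      (¬LeftStep l r p j → l (j+1) = p j + 1 ∧ r (j+1) = r j) := by
    intro j hj hjT
    obtain ⟨-, hp, -, hup⟩ := hrun j hj hjT
    refine ⟨hp, ?_, ?_⟩
    · intro h; rwa [if_pos h] at hup
    · intro h; rwa [if_neg h] at hup
  -- monotonicity
  have hmlr : ∀ s t, 1 ≤ s → s ≤ t → t ≤ T → l s ≤ l t ∧ r t ≤ r s := by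
    intro s t hs hst
    induction t, hst using Nat.le_induction with
    | base => intro _; exact ⟨le_rfl, le_rfl⟩
    | succ t ht ih =>
      intro htT
      have h1t : 1 ≤ t := le_trans hs ht
      have htT' : t < T := htT
      obtain ⟨⟨hlp, hpr⟩, hLft, hRgt⟩ := hstep t h1t htT'
      obtain ⟨ih1, ih2⟩ := ih (by omega)
      by_cases hls : LeftStep l r p t
      · obtain ⟨e1, e2⟩ := hLft hls; omega
      · obtain ⟨e1, e2⟩ := hRgt hls; omega
  -- integer length and jump
  set Lf : ℕ → ℤ := fun j => (r j : ℤ) - (l j : ℤ) with hLfdef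
  set Df : ℕ → ℤ := fun j => Lf j - Lf (j+1) with hDfdef
  have hDd : ∀ j, 1 ≤ j → j < T → Df j = Lf j - Lf (j+1) := fun j _ _ => rfl
  have h2d : ∀ j, 1 ≤ j → j < T → 2 * Df j ≤ Lf j + 1 := by
    intro j hj hjT
    obtain ⟨⟨hlp, hpr⟩, hLft, hRgt⟩ := hstep j hj hjT
    simp only [hDfdef, hLfdef]
    by_cases hls : LeftStep l r p j
    · obtain ⟨e1, e2⟩ := hLft hls
      unfold LeftStep at hls
      omega
    · obtain ⟨e1, e2⟩ := hRgt hls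
      unfold LeftStep at hls
      push_neg at hls
      omega
  have hanti : ∀ i j, 1 ≤ i → i ≤ j → j < T → Lf j ≤ Lf i := by
    intro i j h1 h2 h3
    obtain ⟨a, b2⟩ := hmlr i j h1 h2 (by omega)
    simp only [hLfdef]; omega
  have hDnn : ∀ j, 1 ≤ j → j < T → 0 ≤ Df j := by
    intro j hj hjT
    obtain ⟨a, b2⟩ := hmlr j (j+1) hj (by omega) (by omega)
    simp only [hDfdef, hLfdef]; omega
  set D : ℕ → ℝ := fun j => ((Df j : ℤ) : ℝ) with hDdef
  -- left side greedy
  obtain ⟨S₁, hS₁c, hS₁m, hS₁b⟩ := greedy_ext T hT c hc (fun t => (l t : ℝ)) D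
    (fun j => ¬ LeftStep l r p j)
    (by
      intro s t hs hst htT
      show (l s : ℝ) ≤ (l t : ℝ)
      exact_mod_cast (hmlr s t hs hst htT).1)
    (by
      intro j hj hjT hP
      rw [not_not] at hP
      have := (hstep j hj hjT).2.1 hP
      show ((l (j+1) : ℝ)) = (l j : ℝ)
      exact_mod_cast congrArg (Nat.cast : ℕ → ℝ) this.1)
    (by
      intro j hj hjT
      have hr' := (hmlr j (j+1) hj (by omega) (by omega)).2
      have hr'' : (r (j+1) : ℝ) ≤ (r j : ℝ) := by exact_mod_cast hr'
      show ((l (j+1) : ℝ)) - (l j : ℝ) ≤ D j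
      simp only [hDdef, hDfdef, hLfdef]
      push_cast
      linarith)
    (by exact hC1)
  -- right side greedy
  have hC2' : ¬ ∃ t₁ t₂ t₃ : ℕ, 1 < t₁ ∧ t₁ < t₂ ∧ t₂ < t₃ ∧ t₃ ≤ T ∧
      LeftStep l r p (t₁-1) ∧ LeftStep l r p (t₂-1) ∧ LeftStep l r p (t₃-1) ∧
      c ≤ (fun t => -((r t : ℝ))) t₁ - (fun t => -((r t : ℝ))) 1 ∧
      c ≤ (fun t => -((r t : ℝ))) t₂ - (fun t => -((r t : ℝ))) t₁ ∧
      c ≤ (fun t => -((r t : ℝ))) t₃ - (fun t => -((r t : ℝ))) t₂ := by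
    rintro ⟨t1, t2, t3, a1, a2, a3, a4, a5, a6, a7, a8, a9, a10⟩
    simp only at a8 a9 a10
    exact hC2 ⟨t1, t2, t3, a1, a2, a3, a4, a5, a6, a7, by linarith, by linarith, by linarith⟩
  obtain ⟨S₂, hS₂c, hS₂m, hS₂b⟩ := greedy_ext T hT c hc (fun t => -((r t : ℝ))) D
    (fun j => LeftStep l r p j)
    (by
      intro s t hs hst htT
      have h := (hmlr s t hs hst htT).2
      have h' : (r t : ℝ) ≤ (r s : ℝ) := by exact_mod_cast h
      show -((r s : ℝ)) ≤ -((r t : ℝ))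
      linarith)
    (by
      intro j hj hjT hP
      have h := (hstep j hj hjT).2.2 hP
      have h' : (r (j+1) : ℝ) = (r j : ℝ) := by exact_mod_cast congrArg (Nat.cast : ℕ → ℝ) h.2
      show -((r (j+1) : ℝ)) = -((r j : ℝ))
      rw [h'])
    (by
      intro j hj hjT
      have hl' := (hmlr j (j+1) hj (by omega) (by omega)).1
      have hl'' : (l j : ℝ) ≤ (l (j+1) : ℝ) := by exact_mod_cast hl'
      show -((r (j+1) : ℝ)) - (-((r j : ℝ))) ≤ D j
      simp only [hDdef, hDfdef, hLfdef]
      push_cast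
      linarith)
    hC2'
  -- combine
  have hdisj : Disjoint S₁ S₂ := by
    rw [Finset.disjoint_left]
    intro a ha1 ha2
    exact (hS₁m a ha1).2 ((hS₂m a ha2).2)
  set S := S₁ ∪ S₂ with hSdef
  have hSm : ∀ j ∈ S, 1 ≤ j ∧ j < T := by
    intro j hj
    rcases Finset.mem_union.mp hj with h | h
    · exact (hS₁m j h).1
    · exact (hS₂m j h).1
  have hSM : ∀ j ∈ S, Lf j ≤ Lf 1 := by
    intro j hj
    exact hanti 1 j le_rfl (hSm j hj).1 (hSm j hj).2
  have hcard4 : S.card ≤ 4 := by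
    rw [hSdef]
    exact le_trans (Finset.card_union_le _ _) (by omega)
  have hmain := aux_sum T Lf Df hDd h2d hanti S (Lf 1) hSm hSM
  have hsnn : 0 ≤ ∑ j ∈ S, Df j :=
    Finset.sum_nonneg (fun j hj => hDnn j (hSm j hj).1 (hSm j hj).2)
  have hL1 : Lf 1 + 1 = (n : ℤ) := by
    simp only [hLfdef, hl1, hr1]
    omega
  have hnZ : (0:ℤ) ≤ (n:ℤ) := by positivity
  rw [hL1] at hmain
  have h16 : 16 * (∑ j ∈ S, Df j) ≤ 15 * (n : ℤ) := by
    have hcases : S.card = 0 ∨ S.card = 1 ∨ S.card = 2 ∨ S.card = 3 ∨ S.card = 4 := by omega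
    rcases hcases with h | h | h | h | h <;> rw [h] at hmain <;> norm_num at hmain <;> linarith
  -- to reals
  have hsplit : ∑ j ∈ S, D j = ((∑ j ∈ S, Df j : ℤ) : ℝ) := by
    simp only [hDdef]
    push_cast
    rfl
  have hsum12 : (∑ j ∈ S₁, D j) + (∑ j ∈ S₂, D j) = ∑ j ∈ S, D j :=
    (Finset.sum_union hdisj).symm
  have h16R : 16 * (∑ j ∈ S, D j) ≤ 15 * (n : ℝ) := by
    rw [hsplit]
    exact_mod_cast h16
  -- final contradiction
  have hb1' : (l T : ℝ) - (l 1 : ℝ) < 3 * c + ∑ j ∈ S₁, D j := hS₁b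
  have hb2' : -((r T : ℝ)) - (-((r 1 : ℝ))) < 3 * c + ∑ j ∈ S₂, D j := hS₂b
  rw [hl1] at hb1'
  rw [hr1] at hb2'
  push_cast at hb1' hb2'
  have hfin : ((l T : ℝ)) - 1 + ((n : ℝ) - (r T : ℝ)) < 6 * c + ∑ j ∈ S, D j := by
    rw [← hsum12]
    linarith
  rw [hcdef] at hfin
  linarith [hstop, hfin, h16R, hn']
end
end
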